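/- Let K ≥ 2, 1 > θ_1 > θ_2 > … > θ_K > 0, ε = 0, and c > θ_2(1−θ_1) (with c > 0), so that μ* := θ_1 is the optimal mean reward; set θ̄ := min(θ_1, c/(1−θ_1)) and note θ_k < θ̄ for all k ≥ 2. Consider minimizing Σ_{u∈U} η_u (μ* − μ(u)) over all η : U → [0,∞) subject to, for every k ∈ {2,…,K}, η_{(k)} + η_{(k,1)} ≥ 1/I(θ_k, θ̄). The minimum value equals C(θ) = Σ_{k=2}^K H_k(θ), where H_k(θ) = (c − (1−θ_1)θ_k)/I(θ_k, θ̄) if c < θ_1(1−θ_k) and H_k(θ) = (θ_1 − θ_k)/I(θ_k, θ̄) otherwise; i.e., H_k(θ) = min( θ_1 − θ_k , c − (1−θ_1)θ_k ) / I(θ_k, θ̄). -/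

import Mathlib

noncomputable section

/-- `p0 ε x = ε x + (1−ε)(1−x)`: probability that the ε-noisy measurement of a
Bernoulli(x) arm returns 0. -/
def p0 (ε x : ℝ) : ℝ := ε * x + (1 - ε) * (1 - x)

/-- A static policy: either play arm `k` directly, or measure arm `k` and play
arm `l` if the measurement is 1 and arm `m` if it is 0. -/
inductive Policy where
  | play (k : ℕ)
  | meas (k l m : ℕ)
deriving DecidableEq

/-- Mean reward `μ(u)` of a static policy `u`, with arm means `θ`, noise level `ε`,
and measurement cost `c`. -/
def reward (θ : ℕ → ℝ) (ε c : ℝ) : Policy → ℝ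
  | .play k => θ k
  | .meas k l m =>
      -c + (if l = k then (1 - ε) * θ k else (1 - p0 ε (θ k)) * θ l)
         + (if m = k then ε * θ k else p0 ε (θ k) * θ m)

/-- The finite set `U` of all static policies on arms `{1,…,K}`. -/
def allPolicies (K : ℕ) : Finset Policy :=
  ((Finset.Icc 1 K).image Policy.play) ∪
  (((Finset.Icc 1 K) ×ˢ (Finset.Icc 1 K) ×ˢ (Finset.Icc 1 K)).image
    fun p => Policy.meas p.1 p.2.1 p.2.2)

/-- `I(p,q)`: KL divergence between Bernoulli(p) and Bernoulli(q). -/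
def klBer (p q : ℝ) : ℝ :=
  p * Real.log (p / q) + (1 - p) * Real.log ((1 - p) / (1 - q))

lemma klBer_pos {p q : ℝ} (hp0 : 0 < p) (hp1 : p < 1) (hq0 : 0 < q) (hq1 : q < 1)
    (hne : p ≠ q) : 0 < klBer p q := by
  have h1 : Real.log (q / p) < q / p - 1 := by
    apply Real.log_lt_sub_one_of_pos (div_pos hq0 hp0)
    intro h
    rw [div_eq_one_iff_eq hp0.ne'] at h
    exact hne h.symm
  have h2 : Real.log ((1 - q) / (1 - p)) ≤ (1 - q) / (1 - p) - 1 :=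
    Real.log_le_sub_one_of_pos (div_pos (by linarith) (by linarith))
  have e1 : Real.log (p / q) = - Real.log (q / p) := by
    rw [Real.log_div hp0.ne' hq0.ne', Real.log_div hq0.ne' hp0.ne']; ring
  have e2 : Real.log ((1 - p) / (1 - q)) = - Real.log ((1 - q) / (1 - p)) := by
    rw [Real.log_div (by linarith) (by linarith), Real.log_div (by linarith) (by linarith)]; ring
  have hb1 : p * Real.log (q / p) < p * (q / p - 1) :=
    mul_lt_mul_of_pos_left h1 hp0
  have hb2 : (1 - p) * Real.log ((1 - q) / (1 - p)) ≤ (1 - p) * ((1 - q) / (1 - p) - 1) :=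
    mul_le_mul_of_nonneg_left h2 (by linarith)
  have e3 : p * (q / p - 1) = q - p := by
    field_simp
  have e4 : (1 - p) * ((1 - q) / (1 - p) - 1) = p - q := by
    have : (1 : ℝ) - p ≠ 0 := by linarith
    field_simp; ring
  unfold klBer
  rw [e1, e2]
  nlinarith

set_option maxHeartbeats 1000000 in
/-- Case 2 (`u*(θ) = (1)`, perfect measurements) of the regret
lower-bound optimization problem: with `θ̄ = min(θ_1, c/(1−θ_1))` (and `θ_k < θ̄` for all
`k ≥ 2`), minimizing `Σ_u η_u (μ* − μ(u))` over nonnegative `η` subject to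
`η_{(k)} + η_{(k,1)} ≥ 1/I(θ_k,θ̄)` for `2 ≤ k ≤ K` has minimum value
`C(θ) = Σ_{k=2}^K H_k(θ)` where `H_k(θ) = (c − (1−θ_1)θ_k)/I(θ_k,θ̄)` if
`c < θ_1(1−θ_k)` and `(θ_1−θ_k)/I(θ_k,θ̄)` otherwise; i.e.
`H_k(θ) = min(θ_1−θ_k, c−(1−θ_1)θ_k)/I(θ_k,θ̄)`. -/
theorem stmt7 (K : ℕ) (hK : 2 ≤ K) (θ : ℕ → ℝ)
    (h1 : θ 1 < 1) (hKpos : 0 < θ K)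
    (hmono : ∀ i, 1 ≤ i → i < K → θ (i + 1) < θ i)
    (c : ℝ) (hc : 0 < c) (hcopt : c > θ 2 * (1 - θ 1)) :
    let θbar : ℝ := min (θ 1) (c / (1 - θ 1))
    let H : ℕ → ℝ := fun k =>
      (if c < θ 1 * (1 - θ k) then c - (1 - θ 1) * θ k else θ 1 - θ k) /
        klBer (θ k) θbar
    (∀ k, 2 ≤ k → k ≤ K → θ k < θbar) ∧
    IsLeast
      {x : ℝ | ∃ η : Policy → ℝ, (∀ u, 0 ≤ η u) ∧
        (∀ k, 2 ≤ k → k ≤ K →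
          1 / klBer (θ k) θbar ≤ η (.play k) + η (.meas k k 1)) ∧
        x = ∑ u ∈ allPolicies K, η u * (θ 1 - reward θ 0 c u)}
      (∑ k ∈ Finset.Icc 2 K, H k) ∧
    (∀ k, 2 ≤ k → k ≤ K →
      H k = min (θ 1 - θ k) (c - (1 - θ 1) * θ k) / klBer (θ k) θbar) := by
  intro θbar H
  -- monotonicity facts
  have key : ∀ n i, 1 ≤ i → i + n ≤ K → θ (i + n) ≤ θ i := by
    intro n
    induction n with
    | zero => intro i _ _; simp
    | succ n ih =>
      intro i hi h
      have h1 := hmono (i + n) (by omega) (by omega)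
      have h2 := ih i hi (by omega)
      have : i + (n + 1) = (i + n) + 1 := by omega
      rw [this]; linarith
  have hθmono : ∀ i j, 1 ≤ i → i ≤ j → j ≤ K → θ j ≤ θ i := by
    intro i j hi hij hj
    obtain ⟨n, rfl⟩ : ∃ n, j = i + n := ⟨j - i, by omega⟩
    exact key n i hi hj
  have hpos : ∀ i, 1 ≤ i → i ≤ K → 0 < θ i := fun i hi hik =>
    lt_of_lt_of_le hKpos (hθmono i K hi hik le_rfl)
  have hle1 : ∀ i, 1 ≤ i → i ≤ K → θ i ≤ θ 1 := fun i hi hik =>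
    hθmono 1 i le_rfl hi hik
  have h21 : θ 2 < θ 1 := hmono 1 le_rfl (by omega)
  have h1pos : 0 < θ 1 := hpos 1 le_rfl (by omega)
  have h1m : 0 < 1 - θ 1 := by linarith
  have hle2 : ∀ k, 2 ≤ k → k ≤ K → θ k ≤ θ 2 := fun k h2 hk =>
    hθmono 2 k (by omega) h2 hk
  -- part 1
  have hθbar : ∀ k, 2 ≤ k → k ≤ K → θ k < θbar := by
    intro k h2 hk
    have hk2 := hle2 k h2 hk
    have : θ 2 < c / (1 - θ 1) := (lt_div_iff₀ h1m).mpr (by linarith)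
    exact lt_min (by linarith) (by linarith)
  have hbar1 : θbar < 1 := lt_of_le_of_lt (min_le_left _ _) h1
  have hbar0 : 0 < θbar := lt_min h1pos (div_pos hc h1m)
  have hI : ∀ k, 2 ≤ k → k ≤ K → 0 < klBer (θ k) θbar := fun k h2 hk =>
    klBer_pos (hpos k (by omega) hk) (lt_of_le_of_lt (hle1 k (by omega) hk) h1)
      hbar0 hbar1 (ne_of_lt (hθbar k h2 hk))
  -- part 3
  have hH : ∀ k, 2 ≤ k → k ≤ K →
      H k = min (θ 1 - θ k) (c - (1 - θ 1) * θ k) / klBer (θ k) θbar := by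
    intro k h2 hk
    simp only [H]
    rcases lt_or_ge c (θ 1 * (1 - θ k)) with h | h
    · rw [if_pos h, min_eq_right (by nlinarith)]
    · rw [if_neg (not_lt.mpr h), min_eq_left (by nlinarith)]
  -- gap values for the two special policies
  have Δplay : ∀ k, θ 1 - reward θ 0 c (.play k) = θ 1 - θ k := fun k => rfl
  have Δmeas : ∀ k, 2 ≤ k → θ 1 - reward θ 0 c (.meas k k 1) = c - (1 - θ 1) * θ k := by
    intro k h2
    have hk1 : ¬ (1 = k) := by omega
    simp only [reward, p0, if_neg hk1, if_pos rfl, eq_self_iff_true, if_true, ite_true]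
    ring
  -- min positivity
  have hminpos : ∀ k, 2 ≤ k → k ≤ K →
      0 < min (θ 1 - θ k) (c - (1 - θ 1) * θ k) := by
    intro k h2 hk
    have hk2 := hle2 k h2 hk
    have hkpos := hpos k (by omega) hk
    exact lt_min (by nlinarith) (by nlinarith)
  -- gaps are nonnegative on all policies
  have hgap : ∀ u ∈ allPolicies K, 0 ≤ θ 1 - reward θ 0 c u := by
    intro u hu
    simp only [allPolicies, Finset.mem_union, Finset.mem_image, Finset.mem_product,
      Finset.mem_Icc] at hu
    rcases hu with ⟨k, ⟨hk1, hkK⟩, rfl⟩ | ⟨⟨k, l, m⟩, ⟨⟨hk1, hkK⟩, ⟨hl1, hlK⟩, hm1, hmK⟩, rfl⟩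
    · simpa [reward] using sub_nonneg.mpr (hle1 k hk1 hkK)
    · have hl1' : 1 ≤ l := hl1
      have hm1' : 1 ≤ m := hm1
      have hk1' : 1 ≤ k := hk1
      have hkK' : k ≤ K := hkK
      have hlK' : l ≤ K := hlK
      have hmK' : m ≤ K := hmK
      have hkpos := hpos k hk1 hkK
      have hkle := hle1 k hk1 hkK
      have hlpos := hpos l hl1 hlK
      have hlle := hle1 l hl1 hlK
      have hmpos := hpos m hm1 hmK
      have hmle := hle1 m hm1 hmK
      simp only [reward, p0]
      rcases Nat.lt_or_ge k 2 with hk2 | hk2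
      · -- k = 1
        have hk : k = 1 := by omega
        subst hk
        by_cases hl : l = 1 <;> by_cases hm : m = 1
        · simp only [hl, hm, if_true]; nlinarith
        · have hm2 : θ m ≤ θ 2 := hle2 m (by omega) hmK
          simp only [hl, hm, if_true, if_false]; nlinarith
        · simp only [hl, hm, if_true, if_false]; nlinarith
        · have hm2 : θ m ≤ θ 2 := hle2 m (by omega) hmK
          simp only [hl, hm, if_false]; nlinarith
      · -- k ≥ 2
        have hkub : θ k ≤ θ 2 := hle2 k hk2 hkK
        by_cases hl : l = k <;> by_cases hm : m = k <;>
          simp only [hl, hm, if_pos, if_neg, if_true, if_false]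
        · nlinarith
        · nlinarith
        · nlinarith
        · nlinarith
  refine ⟨hθbar, ⟨?_, ?_⟩, hH⟩
  · -- membership: construct the optimal η
    classical
    set pol : ℕ → Policy := fun k =>
      if c < θ 1 * (1 - θ k) then .meas k k 1 else .play k with hpol
    refine ⟨fun u => ∑ k ∈ (Finset.Icc 2 K).filter (fun k => pol k = u),
      1 / klBer (θ k) θbar, ?_, ?_, ?_⟩
    · intro u
      apply Finset.sum_nonneg
      intro k hk
      simp only [Finset.mem_filter, Finset.mem_Icc] at hk
      exact le_of_lt (one_div_pos.mpr (hI k hk.1.1 hk.1.2))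
    · intro k h2 hk
      have hIk := hI k h2 hk
      have hmem : ∀ u, pol k = u →
          1 / klBer (θ k) θbar ≤
            ∑ j ∈ (Finset.Icc 2 K).filter (fun j => pol j = u), 1 / klBer (θ j) θbar := by
        intro u hu
        apply Finset.single_le_sum (f := fun j => 1 / klBer (θ j) θbar)
          (fun j hj => ?_) (by simp [Finset.mem_filter, Finset.mem_Icc, h2, hk, hu])
        simp only [Finset.mem_filter, Finset.mem_Icc] at hj
        exact le_of_lt (one_div_pos.mpr (hI j hj.1.1 hj.1.2))
      have hnn : ∀ u, 0 ≤ ∑ j ∈ (Finset.Icc 2 K).filter (fun j => pol j = u),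
          1 / klBer (θ j) θbar := by
        intro u
        apply Finset.sum_nonneg
        intro j hj
        simp only [Finset.mem_filter, Finset.mem_Icc] at hj
        exact le_of_lt (one_div_pos.mpr (hI j hj.1.1 hj.1.2))
      by_cases hcc : c < θ 1 * (1 - θ k)
      · have : pol k = .meas k k 1 := by simp [hpol, hcc]
        linarith [hmem _ this, hnn (Policy.play k)]
      · have : pol k = .play k := by simp [hpol, hcc]
        linarith [hmem _ this, hnn (Policy.meas k k 1)]
    · -- value of the objective
      have hmapsto : ∀ k ∈ Finset.Icc 2 K, pol k ∈ allPolicies K := by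
        intro k hk
        simp only [Finset.mem_Icc] at hk
        simp only [hpol, allPolicies, Finset.mem_union, Finset.mem_image,
          Finset.mem_product, Finset.mem_Icc]
        by_cases hcc : c < θ 1 * (1 - θ k)
        · exact Or.inr ⟨(k, k, 1), ⟨⟨show 1 ≤ k by omega, show k ≤ K from hk.2⟩,
            ⟨show 1 ≤ k by omega, show k ≤ K from hk.2⟩,
            show (1:ℕ) ≤ 1 from le_refl 1, show 1 ≤ K by omega⟩,
            by simp [hcc]⟩
        · exact Or.inl ⟨k, ⟨show 1 ≤ k by omega, hk.2⟩, by simp [hcc]⟩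
      have hval : ∑ u ∈ allPolicies K,
          (∑ j ∈ (Finset.Icc 2 K).filter (fun j => pol j = u), 1 / klBer (θ j) θbar)
            * (θ 1 - reward θ 0 c u)
          = ∑ k ∈ Finset.Icc 2 K,
              1 / klBer (θ k) θbar * (θ 1 - reward θ 0 c (pol k)) := by
        rw [← Finset.sum_fiberwise_of_maps_to hmapsto
          (fun k => 1 / klBer (θ k) θbar * (θ 1 - reward θ 0 c (pol k)))]
        refine Finset.sum_congr rfl (fun u hu => ?_)
        rw [Finset.sum_mul]
        refine Finset.sum_congr rfl (fun k hk => ?_)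
        simp only [Finset.mem_filter] at hk
        rw [hk.2]
      rw [hval]
      apply Finset.sum_congr rfl
      intro k hk
      simp only [Finset.mem_Icc] at hk
      simp only [H, hpol]
      by_cases hcc : c < θ 1 * (1 - θ k)
      · rw [if_pos hcc, if_pos hcc, Δmeas k hk.1, div_eq_mul_inv, one_div]; ring
      · rw [if_neg hcc, if_neg hcc, Δplay k, div_eq_mul_inv, one_div]; ring
  · -- lower bound
    rintro x ⟨η, hηnn, hηcon, rfl⟩
    have step1 : ∀ k ∈ Finset.Icc 2 K, H k ≤
        η (.play k) * (θ 1 - reward θ 0 c (.play k)) +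
        η (.meas k k 1) * (θ 1 - reward θ 0 c (.meas k k 1)) := by
      intro k hk
      simp only [Finset.mem_Icc] at hk
      obtain ⟨h2, hkK⟩ := hk
      have hIk := hI k h2 hkK
      have hm := hminpos k h2 hkK
      set m := min (θ 1 - θ k) (c - (1 - θ 1) * θ k) with hmdef
      rw [hH k h2 hkK, Δplay, Δmeas k h2]
      have c1 : m / klBer (θ k) θbar = (1 / klBer (θ k) θbar) * m := by
        rw [div_eq_mul_inv, one_div]; ring
      rw [c1]
      have h2' : (1 / klBer (θ k) θbar) * m ≤ (η (.play k) + η (.meas k k 1)) * m :=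
        mul_le_mul_of_nonneg_right (hηcon k h2 hkK) hm.le
      have h3' : (η (.play k) + η (.meas k k 1)) * m ≤
          η (.play k) * (θ 1 - θ k) + η (.meas k k 1) * (c - (1 - θ 1) * θ k) := by
        have := hηnn (.play k)
        have := hηnn (.meas k k 1)
        have := min_le_left (θ 1 - θ k) (c - (1 - θ 1) * θ k)
        have := min_le_right (θ 1 - θ k) (c - (1 - θ 1) * θ k)
        nlinarith
      linarith
    have step2 : ∑ k ∈ Finset.Icc 2 K, H k ≤
        ∑ k ∈ Finset.Icc 2 K,
          (η (.play k) * (θ 1 - reward θ 0 c (.play k)) +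
           η (.meas k k 1) * (θ 1 - reward θ 0 c (.meas k k 1))) :=
      Finset.sum_le_sum step1
    set f : Policy → ℝ := fun u => η u * (θ 1 - reward θ 0 c u) with hf
    have e1 : ∑ u ∈ (Finset.Icc 2 K).image Policy.play, f u =
        ∑ k ∈ Finset.Icc 2 K, f (.play k) :=
      Finset.sum_image (fun a _ b _ h => by injection h)
    have e2 : ∑ u ∈ (Finset.Icc 2 K).image (fun k => Policy.meas k k 1), f u =
        ∑ k ∈ Finset.Icc 2 K, f (.meas k k 1) :=
      Finset.sum_image (fun a _ b _ h => by injection h)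
    have hdisj : Disjoint ((Finset.Icc 2 K).image Policy.play)
        ((Finset.Icc 2 K).image (fun k => Policy.meas k k 1)) := by
      rw [Finset.disjoint_left]
      rintro u hu1 hu2
      simp only [Finset.mem_image] at hu1 hu2
      obtain ⟨a, _, rfl⟩ := hu1
      obtain ⟨b, _, hb⟩ := hu2
      exact Policy.noConfusion hb
    have e3 : ∑ u ∈ ((Finset.Icc 2 K).image Policy.play) ∪
        ((Finset.Icc 2 K).image (fun k => Policy.meas k k 1)), f u =
        ∑ k ∈ Finset.Icc 2 K, f (.play k) + ∑ k ∈ Finset.Icc 2 K, f (.meas k k 1) := by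
      rw [Finset.sum_union hdisj, e1, e2]
    have hsub : ((Finset.Icc 2 K).image Policy.play) ∪
        ((Finset.Icc 2 K).image (fun k => Policy.meas k k 1)) ⊆ allPolicies K := by
      intro u hu
      simp only [Finset.mem_union, Finset.mem_image, Finset.mem_Icc] at hu
      simp only [allPolicies, Finset.mem_union, Finset.mem_image,
        Finset.mem_product, Finset.mem_Icc]
      rcases hu with ⟨k, hk, rfl⟩ | ⟨k, hk, rfl⟩
      · exact Or.inl ⟨k, ⟨show 1 ≤ k by omega, hk.2⟩, rfl⟩
      · exact Or.inr ⟨(k, k, 1), ⟨⟨show 1 ≤ k by omega, show k ≤ K from hk.2⟩,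
          ⟨show 1 ≤ k by omega, show k ≤ K from hk.2⟩,
          show (1:ℕ) ≤ 1 from le_refl 1, show 1 ≤ K by omega⟩, rfl⟩
    have e4 : ∑ u ∈ ((Finset.Icc 2 K).image Policy.play) ∪
        ((Finset.Icc 2 K).image (fun k => Policy.meas k k 1)), f u ≤
        ∑ u ∈ allPolicies K, f u :=
      Finset.sum_le_sum_of_subset_of_nonneg hsub
        (fun u hu _ => mul_nonneg (hηnn u) (hgap u hu))
    calc ∑ k ∈ Finset.Icc 2 K, H k
        ≤ ∑ k ∈ Finset.Icc 2 K, (f (.play k) + f (.meas k k 1)) := step2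
      _ = ∑ k ∈ Finset.Icc 2 K, f (.play k) + ∑ k ∈ Finset.Icc 2 K, f (.meas k k 1) :=
          Finset.sum_add_distrib
      _ ≤ ∑ u ∈ allPolicies K, f u := by rw [← e3]; exact e4
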